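/- Let $q>1$ and let $Z_1,\dots,Z_N$ be independent nonnegative random variables satisfying $\mathbb{P}(Z_i \ge t) \le t^{-q}$ for all $t\ge 1$ and all $i$. Then for every $s>1$ and $1\le k\le N$, with probability at least $1-s^{-k}$, $\sum_{i=k}^N Z_i^* \le \frac{12 q (es)^{1/q}}{q-1} N$, where $(Z_i^*)$ is the nonincreasing rearrangement of $(Z_i)$. -/

import Mathlib

open MeasureTheory ProbabilityTheory Finset
open scoped ENNReal

lemma pow_self_le_exp_factorial (r : ℕ) : (r : ℝ) ^ r ≤ Real.exp 1 ^ r * r.factorial := by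
  induction r with
  | zero => simp
  | succ n ih =>
    rcases Nat.eq_zero_or_pos n with h | h
    · subst h
      have := Real.add_one_le_exp 1
      norm_num
    · have hn : (0:ℝ) < n := by exact_mod_cast h
      have key : ((n:ℝ)+1) ^ n ≤ Real.exp 1 * (n:ℝ) ^ n := by
        have h1 : ((n:ℝ)+1) ^ n = ((1 + 1/n) * n) ^ n := by
          congr 1; field_simp
        rw [h1, mul_pow]
        have h2 : (1 + 1/(n:ℝ)) ^ n ≤ Real.exp (1/n) ^ n := by
          apply pow_le_pow_left₀ (by positivity)
          linarith [Real.add_one_le_exp (1/(n:ℝ))]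
        have h3 : Real.exp (1/(n:ℝ)) ^ n = Real.exp 1 := by
          rw [← Real.exp_nat_mul]
          congr 1; field_simp
        calc ((1:ℝ) + 1/n) ^ n * (n:ℝ)^n ≤ Real.exp (1/n) ^ n * n^n := by
              apply mul_le_mul_of_nonneg_right h2 (by positivity)
          _ = Real.exp 1 * n^n := by rw [h3]
      have hfact : (n.succ.factorial : ℝ) = ((n:ℝ)+1) * n.factorial := by
        push_cast [Nat.factorial_succ]; ring
      push_cast
      calc ((n:ℝ)+1) ^ (n+1) = ((n:ℝ)+1) * ((n:ℝ)+1)^n := by ring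
        _ ≤ ((n:ℝ)+1) * (Real.exp 1 * (n:ℝ)^n) := by
            apply mul_le_mul_of_nonneg_left key (by positivity)
        _ ≤ ((n:ℝ)+1) * (Real.exp 1 * (Real.exp 1 ^ n * n.factorial)) := by
            apply mul_le_mul_of_nonneg_left (mul_le_mul_of_nonneg_left ih (Real.exp_pos 1).le) (by positivity)
        _ = Real.exp 1 ^ (n+1) * (n.succ.factorial) := by rw [hfact]; push_cast; ring

lemma sum_rpow_neg_le {a : ℝ} (ha : 0 < a) (ha1 : a < 1) (N : ℕ) :
    ∑ r ∈ Finset.Icc 1 N, (r : ℝ) ^ (-a) ≤ (1 - a)⁻¹ * (N : ℝ) ^ (1 - a) := by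
  induction N with
  | zero => simp [Real.zero_rpow (by linarith : (1:ℝ) - a ≠ 0)]
  | succ n ih =>
    rw [Finset.sum_Icc_succ_top (by omega : 1 ≤ n + 1)]
    have hpos : (0:ℝ) < (n:ℝ) + 1 := by positivity
    have key : ((n:ℝ)) ^ (1-a) * ((n:ℝ)+1) ^ a ≤ (1-a) * n + a * ((n:ℝ)+1) := by
      apply Real.geom_mean_le_arith_mean2_weighted (by linarith) ha.le (by positivity)
        (by positivity) (by ring)
    have hsplit : ((n:ℝ)+1) ^ (1-a) = ((n:ℝ)+1) * ((n:ℝ)+1) ^ (-a) := by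
      rw [show (1:ℝ) - a = 1 + (-a) by ring, Real.rpow_add hpos, Real.rpow_one]
    have hsplit2 : ((n:ℝ)) ^ (1-a) = ((n:ℝ)) ^ (1-a) * ((n:ℝ)+1) ^ a * ((n:ℝ)+1) ^ (-a) := by
      rw [mul_assoc, ← Real.rpow_add hpos]
      simp
    have step : (1-a) * ((n:ℝ)+1) ^ (-a) ≤ ((n:ℝ)+1) ^ (1-a) - (n:ℝ) ^ (1-a) := by
      rw [hsplit]
      nth_rewrite 1 [hsplit2]
      rw [← sub_mul]
      apply mul_le_mul_of_nonneg_right _ (by positivity)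
      linarith
    have cast1 : ((n:ℝ)+1) = ((n+1 : ℕ) : ℝ) := by push_cast; ring
    have h1a : (0:ℝ) < 1 - a := by linarith
    calc ∑ r ∈ Finset.Icc 1 n, (r : ℝ) ^ (-a) + ((n+1 : ℕ) : ℝ) ^ (-a)
        ≤ (1-a)⁻¹ * (n:ℝ)^(1-a) + ((n:ℝ)+1) ^ (-a) := by rw [← cast1]; linarith
      _ ≤ (1-a)⁻¹ * ((n+1:ℕ):ℝ)^(1-a) := by
          rw [← cast1]
          have step2 : ((n:ℝ)+1)^(-a) ≤ (1-a)⁻¹ * ((((n:ℝ)+1))^(1-a) - (n:ℝ)^(1-a)) := by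
            rw [le_inv_mul_iff₀ h1a]; exact step
          linarith [step2]

lemma geom_sum_le_two {x : ℝ} (hx : 0 ≤ x) (hx2 : x ≤ 1/2) (n : ℕ) :
    ∑ j ∈ Finset.range n, x ^ j ≤ 2 := by
  induction n with
  | zero => norm_num
  | succ m ih =>
    rw [geom_sum_succ]
    nlinarith [ih]

lemma choose_mul_pow_le {N : ℕ} (r : ℕ) (hN : 1 ≤ N) (s : ℝ) (hs : 1 < s) :
    (N.choose r : ℝ) * ((r : ℝ) / (2 * Real.exp 1 * s * N)) ^ r ≤ ((2*s)⁻¹) ^ r := by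
  have hNpos : (0:ℝ) < N := by exact_mod_cast hN
  have he := Real.exp_pos 1
  have h1 : (N.choose r : ℝ) * (r:ℝ)^r ≤ Real.exp 1^r * (N:ℝ)^r := by
    calc (N.choose r : ℝ) * (r:ℝ)^r
        ≤ (N.choose r : ℝ) * (Real.exp 1^r * r.factorial) :=
          mul_le_mul_of_nonneg_left (pow_self_le_exp_factorial r) (Nat.cast_nonneg _)
      _ = Real.exp 1^r * ((r.factorial : ℝ) * (N.choose r : ℝ)) := by ring
      _ = Real.exp 1^r * (N.descFactorial r : ℝ) := by
          rw [← Nat.cast_mul, ← Nat.descFactorial_eq_factorial_mul_choose]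
      _ ≤ Real.exp 1^r * (N:ℝ)^r := by
          apply mul_le_mul_of_nonneg_left _ (pow_nonneg he.le r)
          exact_mod_cast Nat.descFactorial_le_pow N r
  rw [div_pow, mul_div_assoc', div_le_iff₀ (by positivity)]
  have hkey : ((2*s)⁻¹)^r * (2*Real.exp 1*s*(N:ℝ))^r = Real.exp 1^r * (N:ℝ)^r := by
    rw [← mul_pow, ← mul_pow]
    congr 1
    field_simp
  rw [hkey]
  exact h1

lemma meas_count_le {Ω : Type*} [MeasurableSpace Ω] (μ : Measure Ω) (N : ℕ)
    (Z : Fin N → Ω → ℝ)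
    (hindep : iIndepFun Z μ)
    (r : ℕ) (t : ℝ) (p : ℝ≥0∞) (hp : ∀ j, μ {ω | t ≤ Z j ω} ≤ p) :
    μ {ω | r ≤ #(Finset.univ.filter fun j => t ≤ Z j ω)} ≤ (N.choose r) * p ^ r := by
  classical
  have hsub : {ω | r ≤ #(Finset.univ.filter fun j => t ≤ Z j ω)} ⊆
      ⋃ S ∈ Finset.powersetCard r (Finset.univ : Finset (Fin N)),
        ⋂ j ∈ S, {ω | t ≤ Z j ω} := by
    intro ω hω
    obtain ⟨S, hS, hcard⟩ := Finset.exists_subset_card_eq hω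
    simp only [Set.mem_iUnion]
    refine ⟨S, ?_, ?_⟩
    · simp [Finset.mem_powersetCard, hcard]
    · simp only [Set.mem_iInter]
      intro j hj
      have := hS hj
      simp only [Finset.mem_filter] at this
      exact this.2
  refine (measure_mono hsub).trans ?_
  refine (measure_biUnion_finset_le _ _).trans ?_
  have hterm : ∀ S ∈ Finset.powersetCard r (Finset.univ : Finset (Fin N)),
      μ (⋂ j ∈ S, {ω | t ≤ Z j ω}) ≤ p ^ r := by
    intro S hS
    rw [Finset.mem_powersetCard] at hS
    have heq : μ (⋂ j ∈ S, {ω | t ≤ Z j ω}) = ∏ j ∈ S, μ {ω | t ≤ Z j ω} := by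
      apply hindep.meas_biInter
      intro j _
      exact ⟨Set.Ici t, measurableSet_Ici, rfl⟩
    rw [heq, ← hS.2]
    calc ∏ j ∈ S, μ {ω | t ≤ Z j ω} ≤ ∏ _j ∈ S, p :=
          Finset.prod_le_prod' fun j _ => hp j
      _ = p ^ S.card := Finset.prod_const p
  refine (Finset.sum_le_sum hterm).trans ?_
  rw [Finset.sum_const, Finset.card_powersetCard, Finset.card_univ, Fintype.card_fin,
    nsmul_eq_mul]

/-- The `i`-th largest value (zero-based: `i = 0` is the largest) among `v 0, …, v (N-1)`. -/
noncomputable def orderStat {N : ℕ} (v : Fin N → ℝ) (i : Fin N) : ℝ :=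
  v (Tuple.sort v i.rev)

lemma orderStat_le_card {N : ℕ} (v : Fin N → ℝ) (i : Fin N) (t : ℝ)
    (h : t ≤ orderStat v i) :
    (i : ℕ) + 1 ≤ #(Finset.univ.filter fun j => t ≤ v j) := by
  classical
  set σ := Tuple.sort v with hσ
  have hmono : Monotone (v ∘ σ) := Tuple.monotone_sort v
  have himg : (Finset.Ici i.rev).image σ ⊆ Finset.univ.filter fun j => t ≤ v j := by
    intro j hj
    simp only [Finset.mem_image, Finset.mem_Ici] at hj
    obtain ⟨p, hp, rfl⟩ := hj
    simp only [Finset.mem_filter, Finset.mem_univ, true_and]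
    exact h.trans (hmono hp)
  have hcard : #((Finset.Ici i.rev).image σ) = (i : ℕ) + 1 := by
    rw [Finset.card_image_of_injective _ σ.injective, Fin.card_Ici]
    have := i.isLt
    simp only [Fin.rev]
    omega
  calc (i : ℕ) + 1 = #((Finset.Ici i.rev).image σ) := hcard.symm
    _ ≤ _ := Finset.card_le_card himg

theorem stmt5 {Ω : Type*} [MeasurableSpace Ω] (μ : Measure Ω) [IsProbabilityMeasure μ]
    (N : ℕ) (q : ℝ) (hq : 1 < q) (Z : Fin N → Ω → ℝ)
    (hmeas : ∀ i, Measurable (Z i))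
    (hindep : iIndepFun Z μ)
    (hnonneg : ∀ i ω, 0 ≤ Z i ω)
    (htail : ∀ i, ∀ t : ℝ, 1 ≤ t → μ {ω | t ≤ Z i ω} ≤ ENNReal.ofReal (t ^ (-q)))
    (s : ℝ) (hs : 1 < s) (k : ℕ) (hk1 : 1 ≤ k) (hkN : k ≤ N) :
    1 - ENNReal.ofReal (s⁻¹ ^ k) ≤
      μ {ω | ∑ i ∈ Finset.univ.filter (fun i : Fin N => k ≤ (i : ℕ) + 1),
              orderStat (fun j => Z j ω) i
            ≤ 12 * q * (Real.exp 1 * s) ^ (1/q) / (q - 1) * (N : ℝ)} := by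
  classical
  have hN : 1 ≤ N := le_trans hk1 hkN
  have hNpos : (0:ℝ) < N := by exact_mod_cast hN
  have he := Real.exp_pos 1
  have he1 := Real.add_one_le_exp 1
  have hq0 : (0:ℝ) < q := by linarith
  set a : ℝ := 1/q with ha_def
  have ha : 0 < a := by positivity
  have ha1 : a < 1 := by
    rw [ha_def, div_lt_one hq0]; linarith
  set F : Finset (Fin N) := Finset.univ.filter (fun i : Fin N => k ≤ (i : ℕ) + 1) with hF
  set D : ℝ := 2 * Real.exp 1 * s * N with hD
  have hDpos : 0 < D := by rw [hD]; positivity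
  set τ : Fin N → ℝ := fun i => (D / ((i:ℕ)+1)) ^ a with hτ
  set bound : ℝ := 12 * q * (Real.exp 1 * s) ^ (1/q) / (q - 1) * (N : ℝ) with hbound
  set A : Set Ω := {ω | ∑ i ∈ F, orderStat (fun j => Z j ω) i ≤ bound} with hA
  have hXpos : ∀ i : Fin N, (0:ℝ) < D / ((i:ℕ)+1) := fun i => by positivity
  have hτ1 : ∀ i : Fin N, 1 ≤ τ i := by
    intro i
    apply Real.one_le_rpow _ ha.le
    rw [le_div_iff₀ (by positivity)]
    have hiN : ((i:ℕ):ℝ) + 1 ≤ N := by exact_mod_cast i.isLt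
    rw [hD]
    have hfac : (0:ℝ) ≤ 2*Real.exp 1*s - 1 := by nlinarith
    nlinarith [mul_nonneg hfac hNpos.le]
  -- Step 1: analytic bound
  have hsum : ∑ i ∈ F, τ i ≤ bound := by
    have hτeq : ∀ i : Fin N, τ i = D ^ a * (((i:ℕ)+1:ℝ)) ^ (-a) := by
      intro i
      rw [hτ]
      simp only
      rw [Real.div_rpow hDpos.le (by positivity), Real.rpow_neg (by positivity), div_eq_mul_inv]
    calc ∑ i ∈ F, τ i = D ^ a * ∑ i ∈ F, (((i:ℕ)+1:ℝ)) ^ (-a) := by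
          rw [Finset.mul_sum]; exact Finset.sum_congr rfl fun i _ => hτeq i
      _ ≤ D ^ a * ((1-a)⁻¹ * (N:ℝ) ^ (1-a)) := by
          apply mul_le_mul_of_nonneg_left _ (Real.rpow_nonneg hDpos.le a)
          calc ∑ i ∈ F, (((i:ℕ)+1:ℝ)) ^ (-a)
              = ∑ m ∈ F.image (fun i : Fin N => (i:ℕ)+1), (m:ℝ) ^ (-a) := by
                rw [Finset.sum_image]
                · apply Finset.sum_congr rfl
                  intro i _
                  push_cast
                  rfl
                · intro x _ y _ hxy
                  exact Fin.ext (by simp only at hxy; omega)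
            _ ≤ ∑ m ∈ Finset.Icc 1 N, (m:ℝ) ^ (-a) := by
                apply Finset.sum_le_sum_of_subset_of_nonneg
                · intro m hm
                  simp only [Finset.mem_image] at hm
                  obtain ⟨i, _, rfl⟩ := hm
                  simp only [Finset.mem_Icc]
                  exact ⟨by omega, by have := i.isLt; omega⟩
                · intro m _ _
                  positivity
            _ ≤ (1-a)⁻¹ * (N:ℝ) ^ (1-a) := sum_rpow_neg_le ha ha1 N
      _ ≤ bound := by
          have hDa : D ^ a = 2 ^ a * (Real.exp 1 * s) ^ a * (N:ℝ) ^ a := by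
            rw [hD, show 2 * Real.exp 1 * s * (N:ℝ) = 2 * (Real.exp 1 * s) * N by ring,
              Real.mul_rpow (by positivity) hNpos.le, Real.mul_rpow (by norm_num) (by positivity)]
          have hNaa : (N:ℝ) ^ a * (N:ℝ) ^ (1-a) = N := by
            rw [← Real.rpow_add hNpos]; norm_num
          have h2a : (2:ℝ) ^ a ≤ 2 := by
            calc (2:ℝ) ^ a ≤ (2:ℝ) ^ (1:ℝ) :=
                  Real.rpow_le_rpow_of_exponent_le (by norm_num) ha1.le
              _ = 2 := Real.rpow_one 2
          have hinv : (1-a)⁻¹ = q / (q-1) := by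
            rw [ha_def, show 1 - 1/q = (q-1)/q by field_simp, inv_div]
          have hes1 : (0:ℝ) < (Real.exp 1 * s) ^ a := by positivity
          rw [hDa, hbound, hinv]
          calc 2 ^ a * (Real.exp 1 * s) ^ a * (N:ℝ) ^ a * (q/(q-1) * (N:ℝ) ^ (1-a))
              = (2 ^ a) * ((Real.exp 1 * s) ^ a * (q/(q-1)) * ((N:ℝ)^a * (N:ℝ)^(1-a))) := by ring
            _ = (2 ^ a) * ((Real.exp 1 * s) ^ a * (q/(q-1)) * N) := by rw [hNaa]
            _ ≤ 2 * ((Real.exp 1 * s) ^ a * (q/(q-1)) * N) := by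
                apply mul_le_mul_of_nonneg_right h2a
                have hqq : (0:ℝ) < q/(q-1) := div_pos hq0 (by linarith)
                positivity
            _ ≤ 12 * q * (Real.exp 1 * s) ^ (1/q) / (q-1) * N := by
                rw [← ha_def]
                have hq1 : (0:ℝ) < q - 1 := by linarith
                rw [div_mul_eq_mul_div, le_div_iff₀ hq1]
                have hcan : q/(q-1)*(q-1) = q := div_mul_cancel₀ q (ne_of_gt hq1)
                calc 2 * ((Real.exp 1*s)^a * (q/(q-1)) * (N:ℝ)) * (q-1)
                    = 2 * ((Real.exp 1*s)^a * (N:ℝ)) * (q/(q-1)*(q-1)) := by ring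
                  _ = 2 * ((Real.exp 1*s)^a * (N:ℝ)) * q := by rw [hcan]
                  _ ≤ 12 * q * (Real.exp 1*s)^a * (N:ℝ) := by
                      nlinarith [mul_pos (mul_pos hq0 hes1) hNpos]
  -- Step 2: complement inclusion
  have hcompl : Aᶜ ⊆ ⋃ i ∈ F, {ω | τ i ≤ orderStat (fun j => Z j ω) i} := by
    intro ω hω
    rw [Set.mem_iUnion₂]
    by_contra hnot
    push_neg at hnot
    simp only [Set.mem_setOf_eq] at hnot
    apply hω
    show ∑ i ∈ F, orderStat (fun j => Z j ω) i ≤ bound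
    refine le_trans (Finset.sum_le_sum fun i hi => ?_) hsum
    exact le_of_lt (not_le.mp (hnot i hi))
  -- Step 3: per-index probability bound
  have hbad : ∀ i ∈ F, μ {ω | τ i ≤ orderStat (fun j => Z j ω) i}
      ≤ ENNReal.ofReal (((2*s)⁻¹) ^ ((i:ℕ)+1)) := by
    intro i _
    have hX := hXpos i
    have hτq : (τ i) ^ (-q) = (((i:ℕ)+1:ℝ)) / D := by
      rw [hτ]
      simp only
      rw [← Real.rpow_mul hX.le, show a * (-q) = -1 by rw [ha_def]; field_simp,
        Real.rpow_neg_one, inv_div]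
    have hsub1 : {ω | τ i ≤ orderStat (fun j => Z j ω) i} ⊆
        {ω | (i:ℕ)+1 ≤ #(Finset.univ.filter fun j => τ i ≤ Z j ω)} :=
      fun ω hω => orderStat_le_card _ i (τ i) hω
    refine (measure_mono hsub1).trans ?_
    refine (meas_count_le μ N Z hindep ((i:ℕ)+1) (τ i)
      (ENNReal.ofReal ((τ i) ^ (-q))) (fun j => htail j (τ i) (hτ1 i))).trans ?_
    rw [hτq]
    have hnn : (0:ℝ) ≤ ((i:ℕ)+1:ℝ)/D := by positivity
    rw [← ENNReal.ofReal_pow hnn, ← ENNReal.ofReal_natCast, ← ENNReal.ofReal_mul (by positivity)]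
    apply ENNReal.ofReal_le_ofReal
    have := choose_mul_pow_le (N := N) ((i:ℕ)+1) hN s hs
    rw [hD]
    push_cast at this ⊢
    convert this using 3
  -- Step 4: total probability of bad event
  have hsum2 : μ Aᶜ ≤ ENNReal.ofReal (s⁻¹ ^ k) := by
    refine (measure_mono hcompl).trans ?_
    refine (measure_biUnion_finset_le F _).trans ?_
    refine (Finset.sum_le_sum hbad).trans ?_
    rw [← ENNReal.ofReal_sum_of_nonneg (fun i _ => by positivity)]
    apply ENNReal.ofReal_le_ofReal
    set x : ℝ := (2*s)⁻¹ with hx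
    have hx0 : (0:ℝ) ≤ x := by rw [hx]; positivity
    have hx2 : x ≤ 1/2 := by
      rw [hx, mul_inv]
      have hsi : s⁻¹ ≤ 1 := by
        rw [inv_le_one_iff₀]; right; linarith
      nlinarith [inv_pos.mpr (show (0:ℝ) < s by linarith)]
    have himage : ∑ i ∈ F, x ^ ((i:ℕ)+1)
        = ∑ m ∈ F.image (fun i : Fin N => (i:ℕ)+1), x ^ m := by
      rw [Finset.sum_image]
      intro p _ y _ hxy
      exact Fin.ext (by simp only at hxy; omega)
    calc ∑ i ∈ F, x ^ ((i:ℕ)+1)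
        = ∑ m ∈ F.image (fun i : Fin N => (i:ℕ)+1), x ^ m := himage
      _ ≤ ∑ m ∈ Finset.Ico k (N+1), x ^ m := by
          apply Finset.sum_le_sum_of_subset_of_nonneg
          · intro m hm
            simp only [Finset.mem_image] at hm
            obtain ⟨i, hi, rfl⟩ := hm
            rw [hF, Finset.mem_filter] at hi
            simp only [Finset.mem_Ico]
            exact ⟨hi.2, by have := i.isLt; omega⟩
          · intro m _ _
            positivity
      _ = ∑ j ∈ Finset.range (N+1-k), x ^ (k+j) :=
            Finset.sum_Ico_eq_sum_range (fun m => x ^ m) k (N+1)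
      _ = x^k * ∑ j ∈ Finset.range (N+1-k), x^j := by
          rw [Finset.mul_sum]
          exact Finset.sum_congr rfl fun j _ => pow_add x k j
      _ ≤ x^k * 2 := mul_le_mul_of_nonneg_left (geom_sum_le_two hx0 hx2 _) (by positivity)
      _ ≤ s⁻¹ ^ k := by
          have hxk : x^k = 2⁻¹^k * s⁻¹^k := by rw [hx, mul_inv, mul_pow]
          have h2k : (2⁻¹:ℝ)^k ≤ 2⁻¹ := by
            calc (2⁻¹:ℝ)^k ≤ 2⁻¹^1 :=
                  pow_le_pow_of_le_one (by norm_num) (by norm_num) hk1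
              _ = 2⁻¹ := pow_one _
          have hsk : (0:ℝ) ≤ s⁻¹^k := by positivity
          rw [hxk]
          nlinarith
  -- Step 5: conclude
  have huniv : (1:ℝ≥0∞) ≤ μ A + μ Aᶜ := by
    calc (1:ℝ≥0∞) = μ Set.univ := (measure_univ (μ := μ)).symm
      _ = μ (A ∪ Aᶜ) := by rw [Set.union_compl_self]
      _ ≤ μ A + μ Aᶜ := measure_union_le _ _
  rw [tsub_le_iff_right]
  calc (1:ℝ≥0∞) ≤ μ A + μ Aᶜ := huniv
    _ ≤ μ A + ENNReal.ofReal (s⁻¹^k) := add_le_add le_rfl hsum2
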